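/- Let φ : R → S be an injective homomorphism of commutative rings of prime characteristic p > 0 such that φ is purely inseparable, i.e., for every s ∈ S there exists e ≥ 0 with s^{p^e} ∈ φ(R). Suppose S is reduced, S is F-solid, and there exists an R-linear map g : S → R such that g(1) is a nonzerodivisor of R. Then R is F-solid. -/

import Mathlib

universe u v

/-- **Descent of F-solidity along purely inseparable extensions.**
Let `R → S` be an injective, purely inseparable homomorphism of commutative rings of prime
characteristic `p` (for every `s ∈ S` some `p`-power `s ^ (p ^ e)` lies in the image of `R`).
If `S` is reduced and F-solid, and there is an `R`-linear map `g : S → R` with `g 1` a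
nonzerodivisor of `R`, then `R` is F-solid. -/
theorem fsolid_descends_along_purely_inseparable_extension
    (p : ℕ) [Fact p.Prime]
    (R : Type u) (S : Type v) [CommRing R] [CommRing S]
    [CharP R p] [CharP S p] [Algebra R S]
    (hinj : Function.Injective (algebraMap R S))
    (hpinsep : ∀ s : S, ∃ e : ℕ, s ^ p ^ e ∈ Set.range (algebraMap R S))
    [IsReduced S]
    (hFsolidS : ∃ φ : S →+ S, (∀ a x : S, φ (a ^ p * x) = a * φ x) ∧ φ ≠ 0)
    (g : S →ₗ[R] R) (hg : g 1 ∈ nonZeroDivisors R) :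
    ∃ ψ : R →+ R, (∀ a x : R, ψ (a ^ p * x) = a * ψ x) ∧ ψ ≠ 0 := by
  obtain ⟨φ, hφ, hφne⟩ := hFsolidS
  -- pick `s` with `φ s ≠ 0`
  have hs : ∃ s : S, φ s ≠ 0 := by
    by_contra h
    push_neg at h
    exact hφne (AddMonoidHom.ext fun x => h x)
  obtain ⟨s, hs⟩ := hs
  set t : S := φ s with ht
  obtain ⟨e, r, hr⟩ := hpinsep t
  have hpe : 1 ≤ p ^ e := Nat.one_le_pow _ _ (Fact.out : p.Prime).pos
  have htpe : t ^ p ^ e ≠ 0 := fun h => hs ((IsNilpotent.eq_zero ⟨p ^ e, h⟩))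
  have hrne : r ≠ 0 := by
    intro h
    apply htpe
    rw [← hr, h, map_zero]
  -- the multiplier
  set c : S := t ^ ((p ^ e - 1) * p) * s with hc
  have hφc : φ c = t ^ p ^ e := by
    have h1 : c = (t ^ (p ^ e - 1)) ^ p * s := by rw [hc, pow_mul]
    rw [h1, hφ, ← ht, ← pow_succ, Nat.sub_add_cancel hpe]
  refine ⟨{ toFun := fun x => g (φ (c * algebraMap R S x)),
            map_zero' := by simp,
            map_add' := by
              intro x y
              show g (φ (c * algebraMap R S (x + y))) = _
              rw [map_add, mul_add, map_add, map_add] }, ?_, ?_⟩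
  · intro a x
    have h2 : c * algebraMap R S (a ^ p * x) =
        (algebraMap R S a) ^ p * (c * algebraMap R S x) := by
      rw [map_mul, map_pow]; ring
    simp only [AddMonoidHom.coe_mk, ZeroHom.coe_mk]
    rw [h2, hφ, ← Algebra.smul_def, map_smul, smul_eq_mul]
  · intro h
    have h1 : g (φ (c * algebraMap R S 1)) = 0 := by
      have := DFunLike.congr_fun h (1 : R)
      simpa using this
    rw [map_one, mul_one, hφc, ← hr, Algebra.algebraMap_eq_smul_one, map_smul,
      smul_eq_mul] at h1
    exact hrne ((mul_right_mem_nonZeroDivisors_eq_zero_iff hg).mp h1)
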